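/- Let γ ∈ [0,1), let (P_t)_{t≥0} and (P̂_t)_{t≥0} be sequences of probability distributions on S × A, and let R and R̂ be reward kernels with values in a finite set 𝓡 ⊂ ℝ satisfying |ρ| ≤ r_max, with mean rewards r(s,a) = ∑_{ρ} ρ·R(ρ|s,a) and r̂(s,a) = ∑_{ρ} ρ·R̂(ρ|s,a). Define the discounted returns J = ∑_{t=0}^∞ γ^t ∑_{s,a} P_t(s,a)·r(s,a) and Ĵ = ∑_{t=0}^∞ γ^t ∑_{s,a} P̂_t(s,a)·r̂(s,a). Suppose ε_r ≥ 0 satisfies, for every t ≥ 0, ∑_{s,a} P_t(s,a)·D_TV(R(·|s,a) ‖ R̂(·|s,a)) ≤ ε_r. Then |J − Ĵ| ≤ r_max·∑_{t=0}^∞ γ^t·(2·ε_r + 2·D_TV(P_t ‖ P̂_t)). -/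

import Mathlib

open Finset

/-- Total-variation distance between two functions on a finite type. -/
noncomputable def tv {X : Type*} [Fintype X] (p q : X → ℝ) : ℝ :=
  (1 / 2) * ∑ x, |p x - q x|

/-- Total-variation distance between two functions restricted to a finite set. -/
noncomputable def tvOn {X : Type*} (F : Finset X) (p q : X → ℝ) : ℝ :=
  (1 / 2) * ∑ x ∈ F, |p x - q x|

/-- Return-gap decomposition: the gap between the two discounted returns is bounded by the
discounted sum of reward-kernel errors and TV distances of the state-action distributions. -/
theorem return_gap_le_discounted_errors
    {S A : Type*} [Fintype S] [Fintype A] [Nonempty S] [Nonempty A]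
    (γ : ℝ) (hγ0 : 0 ≤ γ) (hγ1 : γ < 1)
    (P Phat : ℕ → S × A → ℝ)
    (hP : ∀ t, (∀ sa, 0 ≤ P t sa) ∧ ∑ sa, P t sa = 1)
    (hPhat : ∀ t, (∀ sa, 0 ≤ Phat t sa) ∧ ∑ sa, Phat t sa = 1)
    (Rset : Finset ℝ) (rmax : ℝ)
    (hbound : ∀ ρ ∈ Rset, |ρ| ≤ rmax)
    (R Rhat : S × A → ℝ → ℝ)
    (hR : ∀ sa, (∀ ρ ∈ Rset, 0 ≤ R sa ρ) ∧ ∑ ρ ∈ Rset, R sa ρ = 1)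
    (hRhat : ∀ sa, (∀ ρ ∈ Rset, 0 ≤ Rhat sa ρ) ∧ ∑ ρ ∈ Rset, Rhat sa ρ = 1)
    (εr : ℝ) (hεr0 : 0 ≤ εr)
    (hεr : ∀ t, ∑ sa : S × A, P t sa * tvOn Rset (R sa) (Rhat sa) ≤ εr) :
    |(∑' t : ℕ, γ ^ t * ∑ sa : S × A, P t sa * ∑ ρ ∈ Rset, ρ * R sa ρ)
       - ∑' t : ℕ, γ ^ t * ∑ sa : S × A, Phat t sa * ∑ ρ ∈ Rset, ρ * Rhat sa ρ|
      ≤ rmax * ∑' t : ℕ, γ ^ t * (2 * εr + 2 * tv (P t) (Phat t)) := by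
  -- Rset is nonempty
  obtain ⟨ρ0, hρ0⟩ : Rset.Nonempty := by
    by_contra h
    have h2 := (hR (Classical.arbitrary (S × A))).2
    rw [Finset.not_nonempty_iff_eq_empty.mp h] at h2
    simp at h2
  have hrmax : 0 ≤ rmax := le_trans (abs_nonneg _) (hbound ρ0 hρ0)
  -- abbreviations
  set a : ℕ → ℝ := fun t => ∑ sa : S × A, P t sa * ∑ ρ ∈ Rset, ρ * R sa ρ with ha
  set b : ℕ → ℝ := fun t => ∑ sa : S × A, Phat t sa * ∑ ρ ∈ Rset, ρ * Rhat sa ρ with hb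
  -- mean-reward bound
  have hr_abs : ∀ (Q : S × A → ℝ → ℝ),
      (∀ sa, (∀ ρ ∈ Rset, 0 ≤ Q sa ρ) ∧ ∑ ρ ∈ Rset, Q sa ρ = 1) →
      ∀ sa, |∑ ρ ∈ Rset, ρ * Q sa ρ| ≤ rmax := by
    intro Q hQ sa
    calc |∑ ρ ∈ Rset, ρ * Q sa ρ| ≤ ∑ ρ ∈ Rset, |ρ * Q sa ρ| :=
          Finset.abs_sum_le_sum_abs _ _
      _ ≤ ∑ ρ ∈ Rset, rmax * Q sa ρ := by
          apply Finset.sum_le_sum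
          intro ρ hρ
          rw [abs_mul, abs_of_nonneg ((hQ sa).1 ρ hρ)]
          exact mul_le_mul_of_nonneg_right (hbound ρ hρ) ((hQ sa).1 ρ hρ)
      _ = rmax := by rw [← Finset.mul_sum, (hQ sa).2, mul_one]
  -- per-step bound
  have key : ∀ t, |a t - b t| ≤ rmax * (2 * εr + 2 * tv (P t) (Phat t)) := by
    intro t
    have hsplit : a t - b t =
        (∑ sa : S × A, P t sa * ((∑ ρ ∈ Rset, ρ * R sa ρ) - ∑ ρ ∈ Rset, ρ * Rhat sa ρ))
        + ∑ sa : S × A, (P t sa - Phat t sa) * ∑ ρ ∈ Rset, ρ * Rhat sa ρ := by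
      simp only [ha, hb]
      rw [← Finset.sum_add_distrib, ← Finset.sum_sub_distrib]
      apply Finset.sum_congr rfl
      intro sa _
      ring
    have h1 : |∑ sa : S × A, P t sa *
        ((∑ ρ ∈ Rset, ρ * R sa ρ) - ∑ ρ ∈ Rset, ρ * Rhat sa ρ)| ≤ rmax * (2 * εr) := by
      calc |∑ sa : S × A, P t sa * ((∑ ρ ∈ Rset, ρ * R sa ρ) - ∑ ρ ∈ Rset, ρ * Rhat sa ρ)|
          ≤ ∑ sa : S × A, |P t sa * ((∑ ρ ∈ Rset, ρ * R sa ρ) - ∑ ρ ∈ Rset, ρ * Rhat sa ρ)| :=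
            Finset.abs_sum_le_sum_abs _ _
        _ ≤ ∑ sa : S × A, P t sa * (2 * rmax * tvOn Rset (R sa) (Rhat sa)) := by
            apply Finset.sum_le_sum
            intro sa _
            rw [abs_mul, abs_of_nonneg ((hP t).1 sa)]
            apply mul_le_mul_of_nonneg_left _ ((hP t).1 sa)
            calc |(∑ ρ ∈ Rset, ρ * R sa ρ) - ∑ ρ ∈ Rset, ρ * Rhat sa ρ|
                = |∑ ρ ∈ Rset, ρ * (R sa ρ - Rhat sa ρ)| := by
                  rw [← Finset.sum_sub_distrib]
                  congr 1
                  apply Finset.sum_congr rfl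
                  intro ρ _
                  ring
              _ ≤ ∑ ρ ∈ Rset, |ρ * (R sa ρ - Rhat sa ρ)| := Finset.abs_sum_le_sum_abs _ _
              _ ≤ ∑ ρ ∈ Rset, rmax * |R sa ρ - Rhat sa ρ| := by
                  apply Finset.sum_le_sum
                  intro ρ hρ
                  rw [abs_mul]
                  exact mul_le_mul_of_nonneg_right (hbound ρ hρ) (abs_nonneg _)
              _ = 2 * rmax * tvOn Rset (R sa) (Rhat sa) := by
                  rw [tvOn, ← Finset.mul_sum]; ring
        _ = 2 * rmax * ∑ sa : S × A, P t sa * tvOn Rset (R sa) (Rhat sa) := by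
            rw [Finset.mul_sum]
            apply Finset.sum_congr rfl
            intro sa _
            ring
        _ ≤ 2 * rmax * εr := by
            apply mul_le_mul_of_nonneg_left (hεr t)
            positivity
        _ = rmax * (2 * εr) := by ring
    have h2 : |∑ sa : S × A, (P t sa - Phat t sa) * ∑ ρ ∈ Rset, ρ * Rhat sa ρ|
        ≤ rmax * (2 * tv (P t) (Phat t)) := by
      calc |∑ sa : S × A, (P t sa - Phat t sa) * ∑ ρ ∈ Rset, ρ * Rhat sa ρ|
          ≤ ∑ sa : S × A, |(P t sa - Phat t sa) * ∑ ρ ∈ Rset, ρ * Rhat sa ρ| :=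
            Finset.abs_sum_le_sum_abs _ _
        _ ≤ ∑ sa : S × A, |P t sa - Phat t sa| * rmax := by
            apply Finset.sum_le_sum
            intro sa _
            rw [abs_mul]
            exact mul_le_mul_of_nonneg_left (hr_abs Rhat hRhat sa) (abs_nonneg _)
        _ = rmax * (2 * tv (P t) (Phat t)) := by
            rw [tv, ← Finset.sum_mul]; ring
    calc |a t - b t| ≤ |∑ sa : S × A, P t sa *
          ((∑ ρ ∈ Rset, ρ * R sa ρ) - ∑ ρ ∈ Rset, ρ * Rhat sa ρ)|
        + |∑ sa : S × A, (P t sa - Phat t sa) * ∑ ρ ∈ Rset, ρ * Rhat sa ρ| := by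
          rw [hsplit]; exact abs_add_le _ _
      _ ≤ rmax * (2 * εr) + rmax * (2 * tv (P t) (Phat t)) := add_le_add h1 h2
      _ = rmax * (2 * εr + 2 * tv (P t) (Phat t)) := by ring
  -- tv nonneg and bounds
  have htv_nonneg : ∀ t, 0 ≤ tv (P t) (Phat t) := by
    intro t
    rw [tv]
    positivity
  have htv_le : ∀ t, tv (P t) (Phat t) ≤ 1 := by
    intro t
    rw [tv]
    have : ∑ x : S × A, |P t x - Phat t x| ≤ 2 := by
      calc ∑ x : S × A, |P t x - Phat t x| ≤ ∑ x : S × A, (P t x + Phat t x) := by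
            apply Finset.sum_le_sum
            intro x _
            calc |P t x - Phat t x| ≤ |P t x| + |Phat t x| := abs_sub _ _
              _ = P t x + Phat t x := by
                  rw [abs_of_nonneg ((hP t).1 x), abs_of_nonneg ((hPhat t).1 x)]
        _ = 2 := by rw [Finset.sum_add_distrib, (hP t).2, (hPhat t).2]; norm_num
    linarith
  -- pointwise bounds on a, b
  have ha_abs : ∀ t, |a t| ≤ rmax := by
    intro t
    calc |a t| ≤ ∑ sa : S × A, |P t sa * ∑ ρ ∈ Rset, ρ * R sa ρ| :=
          Finset.abs_sum_le_sum_abs _ _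
      _ ≤ ∑ sa : S × A, P t sa * rmax := by
          apply Finset.sum_le_sum
          intro sa _
          rw [abs_mul, abs_of_nonneg ((hP t).1 sa)]
          exact mul_le_mul_of_nonneg_left (hr_abs R hR sa) ((hP t).1 sa)
      _ = rmax := by rw [← Finset.sum_mul, (hP t).2, one_mul]
  have hb_abs : ∀ t, |b t| ≤ rmax := by
    intro t
    calc |b t| ≤ ∑ sa : S × A, |Phat t sa * ∑ ρ ∈ Rset, ρ * Rhat sa ρ| :=
          Finset.abs_sum_le_sum_abs _ _
      _ ≤ ∑ sa : S × A, Phat t sa * rmax := by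
          apply Finset.sum_le_sum
          intro sa _
          rw [abs_mul, abs_of_nonneg ((hPhat t).1 sa)]
          exact mul_le_mul_of_nonneg_left (hr_abs Rhat hRhat sa) ((hPhat t).1 sa)
      _ = rmax := by rw [← Finset.sum_mul, (hPhat t).2, one_mul]
  -- summability
  have hgeo : Summable (fun t : ℕ => γ ^ t) := summable_geometric_of_lt_one hγ0 hγ1
  have hsumA : Summable (fun t : ℕ => γ ^ t * a t) := by
    apply Summable.of_norm_bounded (g := fun t : ℕ => rmax * γ ^ t) (hgeo.mul_left rmax)
    intro t
    rw [Real.norm_eq_abs, abs_mul, abs_of_nonneg (pow_nonneg hγ0 t)]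
    calc γ ^ t * |a t| ≤ γ ^ t * rmax :=
          mul_le_mul_of_nonneg_left (ha_abs t) (pow_nonneg hγ0 t)
      _ = rmax * γ ^ t := by ring
  have hsumB : Summable (fun t : ℕ => γ ^ t * b t) := by
    apply Summable.of_norm_bounded (g := fun t : ℕ => rmax * γ ^ t) (hgeo.mul_left rmax)
    intro t
    rw [Real.norm_eq_abs, abs_mul, abs_of_nonneg (pow_nonneg hγ0 t)]
    calc γ ^ t * |b t| ≤ γ ^ t * rmax :=
          mul_le_mul_of_nonneg_left (hb_abs t) (pow_nonneg hγ0 t)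
      _ = rmax * γ ^ t := by ring
  have hsumC : Summable (fun t : ℕ => γ ^ t * (2 * εr + 2 * tv (P t) (Phat t))) := by
    apply Summable.of_nonneg_of_le
    · intro t
      have := htv_nonneg t
      positivity
    · intro t
      calc γ ^ t * (2 * εr + 2 * tv (P t) (Phat t)) ≤ γ ^ t * (2 * εr + 2 * 1) := by
            apply mul_le_mul_of_nonneg_left _ (pow_nonneg hγ0 t)
            have := htv_le t
            linarith
        _ = (2 * εr + 2) * γ ^ t := by ring
    · exact hgeo.mul_left (2 * εr + 2)
  have hsumD : Summable (fun t : ℕ => |γ ^ t * a t - γ ^ t * b t|) := by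
    apply Summable.of_nonneg_of_le (fun t => abs_nonneg _)
      (fun t => ?_) (hsumC.mul_left rmax)
    rw [← mul_sub, abs_mul, abs_of_nonneg (pow_nonneg hγ0 t)]
    calc γ ^ t * |a t - b t| ≤ γ ^ t * (rmax * (2 * εr + 2 * tv (P t) (Phat t))) :=
          mul_le_mul_of_nonneg_left (key t) (pow_nonneg hγ0 t)
      _ = rmax * (γ ^ t * (2 * εr + 2 * tv (P t) (Phat t))) := by ring
  -- conclude
  rw [← Summable.tsum_sub hsumA hsumB]
  calc |∑' t : ℕ, (γ ^ t * a t - γ ^ t * b t)|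
      ≤ ∑' t : ℕ, |γ ^ t * a t - γ ^ t * b t| := by
        have := norm_tsum_le_tsum_norm (f := fun t : ℕ => γ ^ t * a t - γ ^ t * b t)
          (by simpa [Real.norm_eq_abs] using hsumD)
        simpa [Real.norm_eq_abs] using this
    _ ≤ ∑' t : ℕ, rmax * (γ ^ t * (2 * εr + 2 * tv (P t) (Phat t))) := by
        apply Summable.tsum_le_tsum _ hsumD (hsumC.mul_left rmax)
        intro t
        rw [← mul_sub, abs_mul, abs_of_nonneg (pow_nonneg hγ0 t)]
        calc γ ^ t * |a t - b t| ≤ γ ^ t * (rmax * (2 * εr + 2 * tv (P t) (Phat t))) :=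
              mul_le_mul_of_nonneg_left (key t) (pow_nonneg hγ0 t)
          _ = rmax * (γ ^ t * (2 * εr + 2 * tv (P t) (Phat t))) := by ring
    _ = rmax * ∑' t : ℕ, γ ^ t * (2 * εr + 2 * tv (P t) (Phat t)) := tsum_mul_left
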